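/- The formal power series identity Σ_{λ ∈ P} T^{|λ|} Π_{h ∈ H^{(b)}(λ)} (z/h) = exp(zT/(1−T)) holds in Q[z][[T]]. -/

import Mathlib

open MvPowerSeries

/-- `f` encodes a partition: weakly decreasing with finitely many nonzero parts.
`f i` is the `(i+1)`-st part `λ_{i+1}`. -/
def PartitionFun (f : ℕ → ℕ) : Prop :=
  (∀ i, f (i + 1) ≤ f i) ∧ ∃ N, ∀ i, N ≤ i → f i = 0

/-- The size `|λ|` of a partition. -/
noncomputable def psize (f : ℕ → ℕ) : ℕ := ∑ᶠ i, f i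

/-- `conj f j` is the number of parts of `f` that are `> j`, i.e. the conjugate part `λ'_{j+1}`. -/
noncomputable def conj (f : ℕ → ℕ) (j : ℕ) : ℕ := {i | j < f i}.ncard

/-- The hook length of the cell in row `i+1`, column `j+1`:
`h = λ_{i+1} + λ'_{j+1} - (i+1) - (j+1) + 1`. -/
noncomputable def hookLen (f : ℕ → ℕ) (i j : ℕ) : ℕ := f i + conj f j - i - j - 1

/-- The cell `(i+1, j+1)` is a bottom square: it lies in the diagram and has leg length 0,
i.e. `λ'_{j+1} = i + 1`. -/
noncomputable def bottomCell (f : ℕ → ℕ) (i j : ℕ) : Prop := j < f i ∧ conj f j = i + 1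

/-- `ν_i = Σ_{j ≥ i} ⌊(λ_j − λ_{j+1})/r⌋` (0-based indexing). -/
noncomputable def nuF (r : ℕ) (f : ℕ → ℕ) : ℕ → ℕ :=
  fun i => ∑ᶠ j, if i ≤ j then (f j - f (j + 1)) / r else 0

/-- `μ_i = λ_i − r·ν_i`. -/
noncomputable def muF (r : ℕ) (f : ℕ → ℕ) : ℕ → ℕ :=
  fun i => f i - r * nuF r f i

/-- An `r`-kernel: all successive part differences are `< r`. -/
def KernelFun (r : ℕ) (f : ℕ → ℕ) : Prop := ∀ i, f i - f (i + 1) < r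

/-- An `r`-core: no hook length is divisible by `r`. -/
noncomputable def RCoreFun (r : ℕ) (f : ℕ → ℕ) : Prop :=
  ∀ i j, j < f i → ¬ r ∣ hookLen f i j

/-- `f` and `g` have the same `r`-core, expressed via the abacus/β-number characterisation:
for some `N` beyond the lengths of both partitions, the multisets of residues mod `r` of the
β-numbers `{λ_i + N − i : 1 ≤ i ≤ N}` of the two partitions coincide. -/
def SameRCore (r : ℕ) (f g : ℕ → ℕ) : Prop :=
  ∃ N, (∀ i, N ≤ i → f i = 0) ∧ (∀ i, N ≤ i → g i = 0) ∧
    ∀ c, ((Finset.range N).filter fun i => (f i + N - i - 1) % r = c).card =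
         ((Finset.range N).filter fun i => (g i + N - i - 1) % r = c).card

/-- `|H_r(λ)|`: the number of cells of `λ` whose hook length is divisible by `r`. -/
noncomputable def hrCard (r : ℕ) (f : ℕ → ℕ) : ℕ :=
  {p : ℕ × ℕ | p.2 < f p.1 ∧ r ∣ hookLen f p.1 p.2}.ncard

/-- `|H^{(b)}_r(λ)|`: the number of bottom squares of `λ` whose hook length is divisible
by `r`. -/
noncomputable def botHrCard (r : ℕ) (f : ℕ → ℕ) : ℕ :=
  {p : ℕ × ℕ | bottomCell f p.1 p.2 ∧ r ∣ hookLen f p.1 p.2}.ncard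

/-- The `(σ→₀ℕ)→ℚ` product topology on multivariate formal power series, so that the
infinite sums and products below are the (coefficientwise convergent) formal ones. -/
noncomputable instance mvTop (σ : Type*) : TopologicalSpace (MvPowerSeries σ ℚ) :=
  (inferInstance : TopologicalSpace ((σ →₀ ℕ) → ℚ))

/-- `(a;q)_∞ = Π_{j≥0} (1 - a q^j)`. -/
noncomputable def qPochInf {σ : Type*} (a q : MvPowerSeries σ ℚ) : MvPowerSeries σ ℚ :=
  ∏' j : ℕ, (1 - a * q ^ j)

section Aux

open Finset

variable {f : ℕ → ℕ}

theorem pf_anti (hf : PartitionFun f) : ∀ {i j : ℕ}, i ≤ j → f j ≤ f i := by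
  intro i j hij
  induction j, hij using Nat.le_induction with
  | base => exact le_rfl
  | succ n hn ih => exact le_trans (hf.1 n) ih

theorem psize_eq_sum (hN : ∀ i, N ≤ i → f i = 0) :
    psize f = ∑ i ∈ range N, f i := by
  apply finsum_eq_sum_of_support_subset
  intro i hi
  simp only [Function.mem_support] at hi
  simp only [coe_range, Set.mem_Iio]
  by_contra h
  exact hi (hN i (not_lt.1 h))

theorem pf_zero_beyond (hf : PartitionFun f) {n : ℕ} (hs : psize f = n) :
    ∀ i, n ≤ i → f i = 0 := by
  intro i hi
  by_contra h
  have hfi : 1 ≤ f i := Nat.one_le_iff_ne_zero.2 h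
  obtain ⟨N, hN⟩ := hf.2
  have hN' : ∀ j, max N (i+1) ≤ j → f j = 0 := fun j hj => hN j (le_trans (le_max_left _ _) hj)
  have h1 : psize f = ∑ j ∈ range (max N (i+1)), f j := psize_eq_sum hN'
  have h2 : ∑ j ∈ range (i+1), f j ≤ ∑ j ∈ range (max N (i+1)), f j :=
    Finset.sum_le_sum_of_subset (Finset.range_subset_range.2 (le_max_right _ _))
  have h3 : (range (i+1)).card • 1 ≤ ∑ j ∈ range (i+1), f j := by
    apply Finset.card_nsmul_le_sum
    intro x hx
    simp only [Finset.mem_range] at hx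
    exact le_trans hfi (pf_anti hf (Nat.lt_succ_iff.1 hx))
  simp only [Finset.card_range, smul_eq_mul, mul_one] at h3
  omega

theorem f0_le_psize (hf : PartitionFun f) : f 0 ≤ psize f := by
  obtain ⟨N, hN⟩ := hf.2
  have hN' : ∀ j, N + 1 ≤ j → f j = 0 := fun j hj => hN j (by omega)
  rw [psize_eq_sum hN']
  exact Finset.single_le_sum (fun i _ => Nat.zero_le _) (Finset.mem_range.2 (by omega))

theorem sum_dstep (hf : PartitionFun f) (m : ℕ) :
    ∑ i ∈ range m, (f i - f (i+1)) = f 0 - f m := by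
  induction m with
  | zero => simp
  | succ m ih =>
    rw [Finset.sum_range_succ, ih]
    have h1 : f (m+1) ≤ f m := hf.1 m
    have h2 : f m ≤ f 0 := pf_anti hf (Nat.zero_le m)
    omega

theorem lt_conj_iff (hf : PartitionFun f) (j k : ℕ) : j < f k ↔ k < conj f j := by
  obtain ⟨N, hN⟩ := hf.2
  have hfin : {i | j < f i}.Finite := by
    apply Set.Finite.subset (Set.finite_Iio N)
    intro i hi
    simp only [Set.mem_setOf_eq] at hi
    simp only [Set.mem_Iio]
    by_contra h
    rw [hN i (not_lt.1 h)] at hi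
    omega
  constructor
  · intro h
    have hsub : (Set.Iic k) ⊆ {i | j < f i} := by
      intro i hi
      simp only [Set.mem_Iic] at hi
      exact lt_of_lt_of_le h (pf_anti hf hi)
    have := Set.ncard_le_ncard hsub hfin
    rw [← Finset.coe_Iic, Set.ncard_coe_finset, Nat.card_Iic] at this
    unfold conj
    omega
  · intro h
    by_contra hc
    have hsub : {i | j < f i} ⊆ Set.Iio k := by
      intro i hi
      simp only [Set.mem_setOf_eq] at hi
      simp only [Set.mem_Iio]
      by_contra h'
      exact hc (lt_of_lt_of_le hi (pf_anti hf (not_lt.1 h')))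
    have := Set.ncard_le_ncard hsub (Set.finite_Iio k)
    rw [← Finset.coe_Iio, Set.ncard_coe_finset, Nat.card_Iio] at this
    unfold conj at h
    omega

theorem bottomCell_iff (hf : PartitionFun f) {i j : ℕ} :
    bottomCell f i j ↔ f (i+1) ≤ j ∧ j < f i := by
  unfold bottomCell
  constructor
  · rintro ⟨hj, hc⟩
    refine ⟨?_, hj⟩
    by_contra h
    have := (lt_conj_iff hf j (i+1)).1 (not_le.1 h)
    omega
  · rintro ⟨h1, h2⟩
    refine ⟨h2, ?_⟩
    have ha := (lt_conj_iff hf j i).1 h2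
    have hb : ¬ (i + 1 < conj f j) := fun hc => absurd ((lt_conj_iff hf j (i+1)).2 hc) (not_lt.2 h1)
    omega

theorem hook_bottom (hf : PartitionFun f) {i j : ℕ} (h : bottomCell f i j) :
    hookLen f i j = f i - j := by
  unfold hookLen
  rw [h.2]
  have := h.1
  omega

end Aux

section BottomProd

open Finset MvPowerSeries

local notation "R2" => MvPowerSeries (Fin 2) ℚ

variable {f : ℕ → ℕ} {N : ℕ}

/-- The weight of a partition: product of inverse factorials of successive differences. -/
noncomputable def wgt (f : ℕ → ℕ) : ℚ := ∏ᶠ i, ((Nat.factorial (f i - f (i+1)) : ℚ))⁻¹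

theorem wgt_eq_prod (hN : ∀ i, N ≤ i → f i = 0) :
    wgt f = ∏ i ∈ range N, ((Nat.factorial (f i - f (i+1)) : ℚ))⁻¹ := by
  apply finprod_eq_prod_of_mulSupport_subset
  intro i hi
  simp only [Function.mem_mulSupport] at hi
  simp only [coe_range, Set.mem_Iio]
  by_contra h
  push_neg at h
  rw [hN i h, hN (i+1) (by omega)] at hi
  simp at hi

theorem prod_Ico_sub (a b : ℕ) :
    ∏ j ∈ Finset.Ico a b, (b - j) = Nat.factorial (b - a) := by
  rw [Finset.prod_Ico_eq_prod_range]
  calc ∏ k ∈ range (b - a), (b - (a + k))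
      = ∏ k ∈ range (b - a), ((b - a) - 1 - k + 1) := by
        apply Finset.prod_congr rfl
        intro k hk
        simp only [Finset.mem_range] at hk
        omega
    _ = ∏ k ∈ range (b - a), (k + 1) := Finset.prod_range_reflect (fun x => x + 1) (b - a)
    _ = Nat.factorial (b - a) := Finset.prod_range_add_one_eq_factorial (b - a)

theorem bottom_prod (hf : PartitionFun f) (hN : ∀ i, N ≤ i → f i = 0) :
    (∏ᶠ (p : ℕ × ℕ) (_ : bottomCell f p.1 p.2),
        (X 1 : R2) * C (σ := Fin 2) (R := ℚ) ((hookLen f p.1 p.2 : ℚ)⁻¹)) =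
      (X 1 : R2) ^ (f 0) * C (σ := Fin 2) (R := ℚ) (wgt f) := by
  set g : ℕ × ℕ → R2 :=
    fun p => (X 1 : R2) * C (σ := Fin 2) (R := ℚ) ((hookLen f p.1 p.2 : ℚ)⁻¹) with hg
  set B : Finset (ℕ × ℕ) := (range N).biUnion
    (fun i => (Finset.Ico (f (i+1)) (f i)).map
      ⟨fun j => (i, j), fun a b h => by simpa using congrArg Prod.snd h⟩) with hB
  have hmemB : ∀ p : ℕ × ℕ, p ∈ B ↔ (f (p.1+1) ≤ p.2 ∧ p.2 < f p.1) := by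
    rintro ⟨i, j⟩
    simp only [hB, Finset.mem_biUnion, Finset.mem_map, Finset.mem_Ico, Finset.mem_range,
      Function.Embedding.coeFn_mk]
    constructor
    · rintro ⟨a, _, b, hb, hab⟩
      obtain ⟨rfl, rfl⟩ : a = i ∧ b = j := by
        constructor <;> [exact congrArg Prod.fst hab; exact congrArg Prod.snd hab]
      exact hb
    · rintro ⟨h1, h2⟩
      refine ⟨i, ?_, j, ⟨h1, h2⟩, rfl⟩
      by_contra h
      rw [hN i (not_lt.1 h)] at h2
      omega
  have hBcoe : {p : ℕ × ℕ | bottomCell f p.1 p.2} = ↑B := by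
    ext p
    simp only [Set.mem_setOf_eq, Finset.coe_insert, Finset.mem_coe, hmemB p,
      bottomCell_iff hf]
  have h0 : (∏ᶠ (p : ℕ × ℕ) (_ : bottomCell f p.1 p.2), g p)
      = ∏ᶠ (p : ℕ × ℕ) (_ : p ∈ {q : ℕ × ℕ | bottomCell f q.1 q.2}), g p := rfl
  rw [h0, hBcoe, finprod_mem_coe_finset]
  have hdisj : (↑(range N) : Set ℕ).PairwiseDisjoint
      (fun i => (Finset.Ico (f (i+1)) (f i)).map
        ⟨fun j => (i, j), fun a b h => by simpa using congrArg Prod.snd h⟩) := by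
    intro x _ y _ hxy
    simp only [Function.onFun]
    rw [Finset.disjoint_left]
    rintro ⟨a, b⟩ ha hb
    simp only [Finset.mem_map, Function.Embedding.coeFn_mk] at ha hb
    obtain ⟨_, _, h1⟩ := ha
    obtain ⟨_, _, h2⟩ := hb
    exact hxy ((congrArg Prod.fst h1).trans (congrArg Prod.fst h2).symm)
  rw [hB, Finset.prod_biUnion hdisj]
  have hinner : ∀ i ∈ range N,
      (∏ p ∈ (Finset.Ico (f (i+1)) (f i)).map
        ⟨fun j => (i, j), fun a b h => by simpa using congrArg Prod.snd h⟩, g p)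
      = (X 1 : R2) ^ (f i - f (i+1)) *
          C (σ := Fin 2) (R := ℚ) ((Nat.factorial (f i - f (i+1)) : ℚ))⁻¹ := by
    intro i _
    rw [Finset.prod_map]
    have hcong : ∀ j ∈ Finset.Ico (f (i+1)) (f i),
        g ((⟨fun j => (i, j), fun a b h => by simpa using congrArg Prod.snd h⟩ :
            ℕ ↪ ℕ × ℕ) j)
          = (X 1 : R2) * C (σ := Fin 2) (R := ℚ) (((f i - j : ℕ) : ℚ))⁻¹ := by
      intro j hj
      simp only [Finset.mem_Ico] at hj
      have hbc : bottomCell f i j := (bottomCell_iff hf).2 ⟨hj.1, hj.2⟩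
      simp only [hg, Function.Embedding.coeFn_mk]
      change (X 1 : R2) * C ((hookLen f i j : ℚ)⁻¹) = _
      rw [hook_bottom hf hbc]
    rw [Finset.prod_congr rfl hcong, Finset.prod_mul_distrib, Finset.prod_const,
      Nat.card_Ico, ← map_prod]
    congr 1
    rw [← prod_Ico_sub (f (i+1)) (f i), Nat.cast_prod]
    exact congrArg _ (Finset.prod_inv_distrib (f := fun x => ((f i - x : ℕ) : ℚ)))
  rw [Finset.prod_congr rfl hinner, Finset.prod_mul_distrib, ← map_prod,
    Finset.prod_pow_eq_pow_sum, sum_dstep hf N, hN N le_rfl, Nat.sub_zero,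
    wgt_eq_prod hN]

end BottomProd

section Gseries

open Finset MvPowerSeries

local notation "R2" => MvPowerSeries (Fin 2) ℚ

/-- The geometric series `Σ_n T^n` in the first variable. -/
noncomputable def Gs : R2 := fun m => if m 1 = 0 then 1 else 0

theorem coeff_Gs (m : Fin 2 →₀ ℕ) : coeff m Gs = if m 1 = 0 then 1 else 0 := rfl

/-- The monomial exponent `T^n z^k`. -/
noncomputable def mon2 (n k : ℕ) : Fin 2 →₀ ℕ :=
  Finsupp.single 0 n + Finsupp.single 1 k

theorem mon2_apply0 (n k : ℕ) : mon2 n k 0 = n := by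
  simp [mon2, Finsupp.single_apply]

theorem mon2_apply1 (n k : ℕ) : mon2 n k 1 = k := by
  simp [mon2, Finsupp.single_apply]

theorem eq_mon2 (m : Fin 2 →₀ ℕ) : m = mon2 (m 0) (m 1) := by
  ext a
  fin_cases a
  · simpa using (mon2_apply0 (m 0) (m 1)).symm
  · simpa using (mon2_apply1 (m 0) (m 1)).symm

theorem mon2_eq_iff {n k n' k' : ℕ} : mon2 n k = mon2 n' k' ↔ n = n' ∧ k = k' := by
  constructor
  · intro h
    constructor
    · have := congrArg (fun m : Fin 2 →₀ ℕ => m 0) h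
      simpa [mon2_apply0] using this
    · have := congrArg (fun m : Fin 2 →₀ ℕ => m 1) h
      simpa [mon2_apply1] using this
  · rintro ⟨rfl, rfl⟩; rfl

theorem eq_zero_iff_apply (m : Fin 2 →₀ ℕ) : m = 0 ↔ m 0 = 0 ∧ m 1 = 0 := by
  constructor
  · rintro rfl; simp
  · rintro ⟨h0, h1⟩
    have := eq_mon2 m
    rw [h0, h1] at this
    simpa [mon2] using this

theorem Gs_mul_one_sub : Gs * (1 - X 0) = 1 := by
  apply MvPowerSeries.ext
  intro m
  rw [mul_sub, mul_one, map_sub]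
  have hX : (X 0 : R2) = monomial (Finsupp.single 0 1) 1 := X_def 0
  rw [hX, coeff_mul_monomial]
  rw [coeff_Gs, coeff_one]
  by_cases h1 : m 1 = 0
  · by_cases h0 : m 0 = 0
    · have hm : m = 0 := (eq_zero_iff_apply m).2 ⟨h0, h1⟩
      have : ¬ Finsupp.single (0 : Fin 2) 1 ≤ m := by
        rw [Finsupp.single_le_iff, h0]; omega
      rw [if_neg this, if_pos h1, if_pos hm]
      ring
    · have : Finsupp.single (0 : Fin 2) 1 ≤ m := by
        rw [Finsupp.single_le_iff]; omega
      rw [if_pos this, if_pos h1, if_neg (fun hm => h0 (((eq_zero_iff_apply m).1 hm).1))]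
      have : (m - Finsupp.single 0 1 : Fin 2 →₀ ℕ) 1 = 0 := by
        rw [Finsupp.tsub_apply]
        simp [Finsupp.single_apply, h1]
      rw [coeff_Gs, if_pos this]
      ring
  · have hm : ¬ m = 0 := fun hm => h1 (((eq_zero_iff_apply m).1 hm).2)
    rw [if_neg h1, if_neg hm]
    by_cases hle : Finsupp.single (0 : Fin 2) 1 ≤ m
    · rw [if_pos hle]
      have : (m - Finsupp.single 0 1 : Fin 2 →₀ ℕ) 1 = m 1 := by
        rw [Finsupp.tsub_apply]
        simp [Finsupp.single_apply]
      rw [coeff_Gs, if_neg (this ▸ h1)]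
      ring
    · rw [if_neg hle]; ring

theorem inv_one_sub_X0 : ((1 : R2) - X 0)⁻¹ = Gs := by
  have h : constantCoeff (1 - X 0 : R2) ≠ 0 := by
    rw [map_sub, constantCoeff_one, constantCoeff_X]
    norm_num
  exact ((MvPowerSeries.eq_inv_iff_mul_eq_one h).2 Gs_mul_one_sub).symm

/-- The coefficient array of `(T/(1-T))^k` : `cq k n = coeff of T^n`. -/
noncomputable def cq : ℕ → ℕ → ℚ
  | 0, n => if n = 0 then 1 else 0
  | (k+1), n => ∑ j ∈ range n, cq k j

theorem coeff_XG_pow (k : ℕ) : ∀ n : ℕ,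
    coeff (Finsupp.single 0 n) (((X 0 : R2) * Gs) ^ k) = cq k n := by
  induction k with
  | zero =>
    intro n
    simp only [pow_zero, coeff_one, cq, Finsupp.single_eq_zero]
  | succ k ih =>
    intro n
    have hrw : ((X 0 : R2) * Gs) ^ (k + 1)
        = (((X 0 : R2) * Gs) ^ k * Gs) * monomial (Finsupp.single 0 1) 1 := by
      rw [← X_def 0, pow_succ]
      ring
    rw [hrw, coeff_mul_monomial]
    cases n with
    | zero =>
      have : ¬ Finsupp.single (0 : Fin 2) 1 ≤ Finsupp.single (0 : Fin 2) 0 := by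
        rw [Finsupp.single_le_iff]
        simp
      rw [if_neg this]
      simp [cq]
    | succ n =>
      have hle : Finsupp.single (0 : Fin 2) 1 ≤ Finsupp.single (0 : Fin 2) (n + 1) := by
        rw [Finsupp.single_le_iff]
        simp
      rw [if_pos hle]
      have hsub : Finsupp.single (0 : Fin 2) (n + 1) - Finsupp.single (0 : Fin 2) 1
          = Finsupp.single (0 : Fin 2) n := by
        ext a
        rw [Finsupp.tsub_apply]
        by_cases h : a = 0 <;> simp [Finsupp.single_apply, h]
      rw [hsub, mul_one, coeff_mul, Finsupp.antidiagonal_single, Finset.sum_map]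
      simp only [Function.Embedding.coe_prodMap, Prod.map_fst, Prod.map_snd,
        Function.Embedding.coeFn_mk]
      have hstep : ∀ x : ℕ × ℕ, x ∈ Finset.HasAntidiagonal.antidiagonal n →
          coeff (Finsupp.single (0 : Fin 2) x.1) (((X 0 : R2) * Gs) ^ k) *
            coeff (Finsupp.single (0 : Fin 2) x.2) Gs = cq k x.1 := by
        intro x _
        rw [ih x.1, coeff_Gs]
        simp [Finsupp.single_apply]
      rw [Finset.sum_congr rfl hstep,
        Finset.Nat.sum_antidiagonal_eq_sum_range_succ_mk (fun p => cq k p.1) n]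
      rfl

end Gseries

section Wpow

open Finset MvPowerSeries

local notation "R2" => MvPowerSeries (Fin 2) ℚ

/-- A series involving only the first variable. -/
def Tonly (φ : R2) : Prop := ∀ m : Fin 2 →₀ ℕ, m 1 ≠ 0 → coeff m φ = 0

theorem Tonly_Gs : Tonly Gs := fun m hm => by rw [coeff_Gs, if_neg hm]

theorem Tonly_one : Tonly 1 := by
  intro m hm
  rw [coeff_one, if_neg (fun h => hm (((eq_zero_iff_apply m).1 h).2))]

theorem Tonly_X0 : Tonly (X 0) := by
  intro m hm
  rw [X_def, coeff_monomial]
  by_cases h : m = Finsupp.single 0 1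
  · exfalso
    apply hm
    rw [h]
    simp [Finsupp.single_apply]
  · rw [if_neg h]

theorem Tonly.mul {φ ψ : R2} (hφ : Tonly φ) (hψ : Tonly ψ) : Tonly (φ * ψ) := by
  intro m hm
  rw [coeff_mul]
  apply Finset.sum_eq_zero
  rintro ⟨a, b⟩ hab
  rw [Finset.HasAntidiagonal.mem_antidiagonal] at hab
  have hsum : a 1 + b 1 = m 1 := by
    rw [← hab]
    simp
  by_cases ha : a 1 = 0
  · have hb : b 1 ≠ 0 := by omega
    rw [hψ b hb, mul_zero]
  · rw [hφ a ha, zero_mul]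

theorem Tonly.pow {φ : R2} (hφ : Tonly φ) (k : ℕ) : Tonly (φ ^ k) := by
  induction k with
  | zero => simpa using Tonly_one
  | succ k ih => rw [pow_succ]; exact ih.mul hφ

theorem coeff_W_pow (n k k' : ℕ) :
    coeff (mon2 n k) (((X 1 : R2) * X 0 * (1 - X 0)⁻¹) ^ k')
      = if k' = k then cq k n else 0 := by
  rw [inv_one_sub_X0]
  have hW : ((X 1 : R2) * X 0 * Gs) ^ k' = (X 1 : R2) ^ k' * ((X 0 : R2) * Gs) ^ k' := by
    rw [← mul_pow]
    ring_nf
  rw [hW, X_pow_eq, coeff_monomial_mul]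
  by_cases hle : Finsupp.single (1 : Fin 2) k' ≤ mon2 n k
  · rw [if_pos hle]
    have hk' : k' ≤ k := by
      have := Finsupp.single_le_iff.1 hle
      rwa [mon2_apply1] at this
    have hsub : mon2 n k - Finsupp.single 1 k' = mon2 n (k - k') := by
      ext a
      rw [Finsupp.tsub_apply]
      fin_cases a <;> simp [mon2, Finsupp.single_apply]
    rw [hsub, one_mul]
    by_cases hkk : k' = k
    · subst hkk
      rw [if_pos rfl]
      have h2 : mon2 n (k' - k') = Finsupp.single 0 n := by
        simp [mon2]
      rw [h2, coeff_XG_pow]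
    · rw [if_neg hkk]
      apply (Tonly_X0.mul Tonly_Gs).pow k'
      rw [mon2_apply1]
      omega
  · have hkk : k' ≠ k := by
      intro h
      apply hle
      rw [Finsupp.single_le_iff, mon2_apply1, h]
    rw [if_neg hle, if_neg hkk]

theorem rhs_term_coeff (m : Fin 2 →₀ ℕ) (k' : ℕ) :
    coeff m (((Nat.factorial k' : ℚ)⁻¹) • ((X 1 : R2) * X 0 * (1 - X 0)⁻¹) ^ k')
      = if k' = m 1 then ((Nat.factorial (m 1) : ℚ))⁻¹ * cq (m 1) (m 0) else 0 := by
  rw [coeff_smul]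
  have h1 : coeff m (((X 1 : R2) * X 0 * (1 - X 0)⁻¹) ^ k')
      = if k' = m 1 then cq (m 1) (m 0) else 0 := by
    conv_lhs => rw [eq_mon2 m]
    rw [coeff_W_pow]
  rw [h1]
  by_cases h : k' = m 1
  · rw [if_pos h, if_pos h, h]
  · rw [if_neg h, if_neg h, mul_zero]

theorem rhs_summable :
    Summable (fun k' : ℕ => ((Nat.factorial k' : ℚ)⁻¹) •
      ((X 1 : MvPowerSeries (Fin 2) ℚ) * X 0 * (1 - X 0)⁻¹) ^ k') := by
  apply Pi.summable.mpr
  intro m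
  apply summable_of_ne_finset_zero (s := {m 1})
  intro k' hk'
  simp only [Finset.mem_singleton] at hk'
  exact (rhs_term_coeff m k').trans (if_neg hk')

theorem rhs_apply (m : Fin 2 →₀ ℕ) :
    coeff m (∑' k' : ℕ, ((Nat.factorial k' : ℚ)⁻¹) •
        ((X 1 : MvPowerSeries (Fin 2) ℚ) * X 0 * (1 - X 0)⁻¹) ^ k')
      = ((Nat.factorial (m 1) : ℚ))⁻¹ * cq (m 1) (m 0) := by
  have h0 : coeff m (∑' k' : ℕ, ((Nat.factorial k' : ℚ)⁻¹) •
        ((X 1 : MvPowerSeries (Fin 2) ℚ) * X 0 * (1 - X 0)⁻¹) ^ k')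
      = ∑' k' : ℕ, coeff m (((Nat.factorial k' : ℚ)⁻¹) •
        ((X 1 : MvPowerSeries (Fin 2) ℚ) * X 0 * (1 - X 0)⁻¹) ^ k') :=
    tsum_apply rhs_summable
  rw [h0, tsum_eq_sum (s := {m 1}) (fun k' hk' =>
      (rhs_term_coeff m k').trans (if_neg (by simpa using hk'))),
    Finset.sum_singleton, rhs_term_coeff, if_pos rfl]

end Wpow

section LHS

open Finset MvPowerSeries

local notation "R2" => MvPowerSeries (Fin 2) ℚ
local notation "PT" => {f : ℕ → ℕ // PartitionFun f}

variable {f : ℕ → ℕ}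

theorem fi_le_psize (hf : PartitionFun f) (i : ℕ) : f i ≤ psize f := by
  obtain ⟨N, hN⟩ := hf.2
  have hN' : ∀ j, max N (i+1) ≤ j → f j = 0 := fun j hj => hN j (le_trans (le_max_left _ _) hj)
  rw [psize_eq_sum hN']
  exact Finset.single_le_sum (fun x _ => Nat.zero_le _) (Finset.mem_range.2 (by omega))

theorem lterm_eq (hf : PartitionFun f) :
    (X 0 : R2) ^ psize f *
        ∏ᶠ (p : ℕ × ℕ) (_ : bottomCell f p.1 p.2),
          (X 1 : R2) * C (σ := Fin 2) (R := ℚ) ((hookLen f p.1 p.2 : ℚ)⁻¹)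
      = monomial (mon2 (psize f) (f 0)) (wgt f) := by
  obtain ⟨N, hN⟩ := hf.2
  rw [bottom_prod hf hN, X_pow_eq, X_pow_eq, ← monomial_zero_eq_C_apply,
    monomial_mul_monomial, monomial_mul_monomial]
  rw [one_mul, one_mul, add_zero]
  rfl

theorem lterm_coeff (hf : PartitionFun f) (m : Fin 2 →₀ ℕ) :
    coeff m ((X 0 : R2) ^ psize f *
        ∏ᶠ (p : ℕ × ℕ) (_ : bottomCell f p.1 p.2),
          (X 1 : R2) * C (σ := Fin 2) (R := ℚ) ((hookLen f p.1 p.2 : ℚ)⁻¹))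
      = if psize f = m 0 ∧ f 0 = m 1 then wgt f else 0 := by
  rw [lterm_eq hf, coeff_monomial]
  by_cases h : psize f = m 0 ∧ f 0 = m 1
  · have hm : m = mon2 (psize f) (f 0) := by
      rw [h.1, h.2]
      exact eq_mon2 m
    rw [if_pos hm, if_pos h]
  · have hm : ¬ m = mon2 (psize f) (f 0) := by
      intro hc
      apply h
      constructor
      · rw [hc, mon2_apply0]
      · rw [hc, mon2_apply1]
    rw [if_neg hm, if_neg h]

theorem psetn_finite (n : ℕ) : {lam : PT | psize lam.1 = n}.Finite := by
  have h1 : {g : Fin n → ℕ | ∀ i, g i ≤ n}.Finite := by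
    have hsub : {g : Fin n → ℕ | ∀ i, g i ≤ n} ⊆
        (fun h : Fin n → Fin (n+1) => fun i => (h i : ℕ)) '' Set.univ := by
      intro g hg
      exact ⟨fun i => ⟨g i, Nat.lt_succ_of_le (hg i)⟩, trivial, rfl⟩
    exact (Set.finite_univ.image _).subset hsub
  apply Set.Finite.of_finite_image (f := fun lam : PT => (fun i : Fin n => lam.1 i))
  · apply h1.subset
    rintro g ⟨lam, hlam, rfl⟩
    intro i
    simp only [Set.mem_setOf_eq] at hlam
    exact hlam ▸ fi_le_psize lam.2 i
  · intro lam1 h1' lam2 h2' heq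
    simp only [Set.mem_setOf_eq] at h1' h2'
    apply Subtype.ext
    funext i
    by_cases hi : i < n
    · exact congrFun heq ⟨i, hi⟩
    · rw [pf_zero_beyond lam1.2 h1' i (not_lt.1 hi),
        pf_zero_beyond lam2.2 h2' i (not_lt.1 hi)]

theorem psetnk_finite (n k : ℕ) :
    {lam : PT | psize lam.1 = n ∧ lam.1 0 = k}.Finite :=
  (psetn_finite n).subset (fun _ h => h.1)

theorem lhs_summable :
    Summable (fun lam : PT =>
      (X 0 : MvPowerSeries (Fin 2) ℚ) ^ psize lam.1 *
        ∏ᶠ (p : ℕ × ℕ) (_ : bottomCell lam.1 p.1 p.2),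
          (X 1 : MvPowerSeries (Fin 2) ℚ) * C (σ := Fin 2) (R := ℚ) ((hookLen lam.1 p.1 p.2 : ℚ)⁻¹)) := by
  apply Pi.summable.mpr
  intro m
  apply summable_of_ne_finset_zero (s := (psetn_finite (m 0)).toFinset)
  intro lam hlam
  have h : ¬ psize lam.1 = m 0 := by
    simpa [Set.Finite.mem_toFinset] using hlam
  exact (lterm_coeff lam.2 m).trans (if_neg (fun hc => h hc.1))

theorem lhs_apply (m : Fin 2 →₀ ℕ) :
    coeff m (∑' lam : PT,
        (X 0 : MvPowerSeries (Fin 2) ℚ) ^ psize lam.1 *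
          ∏ᶠ (p : ℕ × ℕ) (_ : bottomCell lam.1 p.1 p.2),
            (X 1 : MvPowerSeries (Fin 2) ℚ) * C (σ := Fin 2) (R := ℚ) ((hookLen lam.1 p.1 p.2 : ℚ)⁻¹))
      = ∑ lam ∈ (psetnk_finite (m 0) (m 1)).toFinset, wgt lam.1 := by
  have h0 : coeff m (∑' lam : PT,
        (X 0 : MvPowerSeries (Fin 2) ℚ) ^ psize lam.1 *
          ∏ᶠ (p : ℕ × ℕ) (_ : bottomCell lam.1 p.1 p.2),
            (X 1 : MvPowerSeries (Fin 2) ℚ) * C (σ := Fin 2) (R := ℚ) ((hookLen lam.1 p.1 p.2 : ℚ)⁻¹))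
      = ∑' lam : PT, coeff m ((X 0 : MvPowerSeries (Fin 2) ℚ) ^ psize lam.1 *
          ∏ᶠ (p : ℕ × ℕ) (_ : bottomCell lam.1 p.1 p.2),
            (X 1 : MvPowerSeries (Fin 2) ℚ) * C (σ := Fin 2) (R := ℚ) ((hookLen lam.1 p.1 p.2 : ℚ)⁻¹)) :=
    tsum_apply lhs_summable
  rw [h0, tsum_eq_sum (s := (psetn_finite (m 0)).toFinset) (fun lam hlam =>
    (lterm_coeff lam.2 m).trans (if_neg (fun hc =>
      (by simpa [Set.Finite.mem_toFinset] using hlam : ¬ psize lam.1 = m 0) hc.1)))]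
  have hsub : (psetnk_finite (m 0) (m 1)).toFinset ⊆ (psetn_finite (m 0)).toFinset := by
    intro lam h
    simp only [Set.Finite.mem_toFinset, Set.mem_setOf_eq] at h ⊢
    exact h.1
  calc ∑ lam ∈ (psetn_finite (m 0)).toFinset,
        coeff m ((X 0 : MvPowerSeries (Fin 2) ℚ) ^ psize lam.1 *
          ∏ᶠ (p : ℕ × ℕ) (_ : bottomCell lam.1 p.1 p.2),
            (X 1 : MvPowerSeries (Fin 2) ℚ) * C (σ := Fin 2) (R := ℚ) ((hookLen lam.1 p.1 p.2 : ℚ)⁻¹))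
      = ∑ lam ∈ (psetnk_finite (m 0) (m 1)).toFinset,
        coeff m ((X 0 : MvPowerSeries (Fin 2) ℚ) ^ psize lam.1 *
          ∏ᶠ (p : ℕ × ℕ) (_ : bottomCell lam.1 p.1 p.2),
            (X 1 : MvPowerSeries (Fin 2) ℚ) * C (σ := Fin 2) (R := ℚ) ((hookLen lam.1 p.1 p.2 : ℚ)⁻¹)) := by
        apply (Finset.sum_subset hsub ?_).symm
        intro lam hlam hnot
        simp only [Set.Finite.mem_toFinset, Set.mem_setOf_eq] at hlam hnot
        rw [lterm_coeff lam.2 m]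
        apply if_neg
        intro hc
        exact hnot ⟨hc.1, hc.2⟩
    _ = ∑ lam ∈ (psetnk_finite (m 0) (m 1)).toFinset, wgt lam.1 := by
        apply Finset.sum_congr rfl
        intro lam hlam
        simp only [Set.Finite.mem_toFinset, Set.mem_setOf_eq] at hlam
        rw [lterm_coeff lam.2 m]
        exact if_pos ⟨hlam.1, hlam.2⟩

end LHS

section Comb

open Finset

theorem hockey (m r : ℕ) : ∑ i ∈ range m, (i.choose r) = m.choose (r+1) := by
  induction m with
  | zero => simp
  | succ m ih =>
    rw [Finset.sum_range_succ, ih, Nat.choose_succ_succ' m r]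
    omega

theorem cq_zero_right (k : ℕ) : cq k 0 = if k = 0 then 1 else 0 := by
  cases k with
  | zero => simp [cq]
  | succ k => simp [cq]

theorem cq_eq_zero_of_lt : ∀ k n, n < k → cq k n = 0 := by
  intro k
  induction k with
  | zero => intro n h; omega
  | succ k ih =>
    intro n h
    show (∑ j ∈ range n, cq k j) = 0
    apply Finset.sum_eq_zero
    intro j hj
    simp only [Finset.mem_range] at hj
    exact ih j (by omega)

theorem cq_closed : ∀ k n, 1 ≤ k → 1 ≤ n → cq k n = (((n-1).choose (k-1) : ℕ) : ℚ) := by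
  intro k
  induction k with
  | zero => intro n h; omega
  | succ k ih =>
    intro n hk hn
    obtain ⟨m, rfl⟩ : ∃ m, n = m + 1 := ⟨n - 1, by omega⟩
    show (∑ j ∈ range (m+1), cq k j) = _
    rw [Finset.sum_range_succ' _ m]
    cases k with
    | zero =>
      have hz : ∀ i ∈ range m, cq 0 (i+1) = 0 := fun i _ => by simp [cq]
      rw [Finset.sum_congr rfl hz]
      simp [cq]
    | succ k =>
      rw [cq_zero_right]
      have hs : ∀ i ∈ range m, cq (k+1) (i+1) = ((i.choose k : ℕ) : ℚ) := by
        intro i _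
        rw [ih (i+1) (by omega) (by omega)]
        norm_num
      rw [Finset.sum_congr rfl hs, if_neg (by omega), add_zero, ← Nat.cast_sum, hockey]
      norm_num

theorem NI {k n : ℕ} (hk : 1 ≤ k) (hkn : k < n) :
    (n-1).choose (k-1) = ∑ j ∈ range (k+1),
      k.choose j * (if j = 0 then 0 else (n-k-1).choose (j-1)) := by
  have hv := Nat.add_choose_eq k (n-k-1) (k-1)
  have hnk : k + (n-k-1) = n-1 := by omega
  rw [hnk] at hv
  rw [hv, Finset.Nat.sum_antidiagonal_eq_sum_range_succ_mk]
  have hrange : (k-1).succ = k := by omega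
  rw [hrange, Finset.sum_range_succ' _ k]
  simp only [if_neg (Nat.succ_ne_zero _), if_pos rfl, mul_zero, add_zero, Nat.add_sub_cancel]
  rw [← Finset.sum_range_reflect]
  apply Finset.sum_congr rfl
  intro i hi
  simp only [Finset.mem_range] at hi
  have h1 : k - 1 - (k - 1 - i) = i := by omega
  have h2 : k.choose (k - 1 - i) = k.choose (i+1) := by
    rw [← Nat.choose_symm (by omega : i + 1 ≤ k)]
    congr 1
    omega
  rw [h1, h2]

theorem cq_vandermonde {k n : ℕ} (hk : 1 ≤ k) (hkn : k ≤ n) :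
    cq k n = ∑ j ∈ range (k+1), (k.choose j : ℚ) * cq j (n-k) := by
  rcases eq_or_lt_of_le hkn with heq | hlt
  · subst heq
    rw [cq_closed k k hk (by omega), Nat.sub_self]
    have hterm : ∀ j ∈ range (k+1), (k.choose j : ℚ) * cq j 0
        = if j = 0 then (k.choose j : ℚ) else 0 := by
      intro j _
      rw [cq_zero_right]
      by_cases h : j = 0
      · rw [if_pos h, if_pos h, mul_one]
      · rw [if_neg h, if_neg h, mul_zero]
    rw [Finset.sum_congr rfl hterm, Finset.sum_ite_eq' (range (k+1)) 0 (fun j => (k.choose j : ℚ))]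
    rw [if_pos (Finset.mem_range.2 (by omega))]
    simp
  · rw [cq_closed k n hk (by omega)]
    have hterm : ∀ j ∈ range (k+1), (k.choose j : ℚ) * cq j (n-k)
        = ((k.choose j * (if j = 0 then 0 else (n-k-1).choose (j-1)) : ℕ) : ℚ) := by
      intro j _
      by_cases h : j = 0
      · subst h
        rw [if_pos rfl]
        show (k.choose 0 : ℚ) * cq 0 (n-k) = _
        have : cq 0 (n-k) = if n - k = 0 then 1 else 0 := rfl
        rw [this, if_neg (by omega)]
        simp
      · rw [if_neg h, cq_closed j (n-k) (by omega) (by omega)]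
        push_cast
        ring
    rw [Finset.sum_congr rfl hterm, ← Nat.cast_sum, ← NI hk hlt]

end Comb

section Key

open Finset

local notation "PT" => {f : ℕ → ℕ // PartitionFun f}

variable {f g : ℕ → ℕ}

theorem pf_shift (hf : PartitionFun f) : PartitionFun (fun i => f (i+1)) := by
  obtain ⟨N, hN⟩ := hf.2
  exact ⟨fun i => hf.1 (i+1), ⟨N, fun i hi => hN (i+1) (by omega)⟩⟩

theorem psize_shift (hf : PartitionFun f) :
    psize f = f 0 + psize (fun i => f (i+1)) := by
  obtain ⟨N, hN⟩ := hf.2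
  have h1 : psize f = ∑ i ∈ range (N+1), f i :=
    psize_eq_sum (fun i hi => hN i (by omega))
  have h2 : psize (fun i => f (i+1)) = ∑ i ∈ range N, f (i+1) :=
    psize_eq_sum (fun i hi => hN (i+1) (by omega))
  rw [h1, h2, Finset.sum_range_succ' f N]
  omega

theorem wgt_shift (hf : PartitionFun f) :
    wgt f = ((Nat.factorial (f 0 - f 1) : ℚ))⁻¹ * wgt (fun i => f (i+1)) := by
  obtain ⟨N, hN⟩ := hf.2
  have h1 : wgt f = ∏ i ∈ range (N+1), ((Nat.factorial (f i - f (i+1)) : ℚ))⁻¹ :=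
    wgt_eq_prod (fun i hi => hN i (by omega))
  have h2 : wgt (fun i => f (i+1)) = ∏ i ∈ range N, ((Nat.factorial (f (i+1) - f (i+2)) : ℚ))⁻¹ :=
    wgt_eq_prod (N := N) (fun i hi => hN (i+1) (by omega))
  rw [h1, h2, Finset.prod_range_succ' _ N]
  ring

/-- Prepend a part `c` to a partition. -/
def consf (c : ℕ) (g : ℕ → ℕ) : ℕ → ℕ := fun i => Nat.casesOn i c g

theorem pf_cons (hg : PartitionFun g) (h : g 0 ≤ c) : PartitionFun (consf c g) := by
  obtain ⟨N, hN⟩ := hg.2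
  constructor
  · intro i
    cases i with
    | zero => exact h
    | succ i => exact hg.1 i
  · refine ⟨N + 1, fun i hi => ?_⟩
    cases i with
    | zero => omega
    | succ i => exact hN i (by omega)

theorem shift_consf (c : ℕ) (g : ℕ → ℕ) : (fun i => consf c g (i+1)) = g := rfl

noncomputable def shiftPT (lam : PT) : PT := ⟨fun i => lam.1 (i+1), pf_shift lam.2⟩

noncomputable def consPT (c : ℕ) (g : PT) : PT :=
  ⟨consf (max c (g.1 0)) g.1, pf_cons g.2 (le_max_right _ _)⟩

theorem mem_psetnk (n k : ℕ) (lam : PT) :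
    lam ∈ (psetnk_finite n k).toFinset ↔ psize lam.1 = n ∧ lam.1 0 = k := by
  rw [Set.Finite.mem_toFinset]
  rfl

theorem partition_rec {n k : ℕ} (hk : 1 ≤ k) (hkn : k ≤ n) :
    ∑ lam ∈ (psetnk_finite n k).toFinset, wgt lam.1
      = ∑ j ∈ range (k+1), ((Nat.factorial (k - j) : ℚ))⁻¹ *
          ∑ gg ∈ (psetnk_finite (n-k) j).toFinset, wgt gg.1 := by
  have hrhs : ∀ j ∈ range (k+1),
      ((Nat.factorial (k - j) : ℚ))⁻¹ * ∑ gg ∈ (psetnk_finite (n-k) j).toFinset, wgt gg.1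
        = ∑ gg ∈ (psetnk_finite (n-k) j).toFinset, ((Nat.factorial (k - j) : ℚ))⁻¹ * wgt gg.1 :=
    fun j _ => Finset.mul_sum _ _ _
  rw [Finset.sum_congr rfl hrhs, Finset.sum_sigma']
  apply Finset.sum_nbij' (i := fun lam => (⟨lam.1 1, shiftPT lam⟩ : Σ _ : ℕ, PT))
    (j := fun x => consPT k x.2)
  · rintro lam hlam
    rw [mem_psetnk] at hlam
    rw [Finset.mem_sigma]
    constructor
    · rw [Finset.mem_range]
      show lam.1 1 < k + 1
      have : lam.1 1 ≤ lam.1 0 := lam.2.1 0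
      omega
    · rw [mem_psetnk]
      constructor
      · have := psize_shift lam.2
        show psize (fun i => lam.1 (i+1)) = n - k
        omega
      · rfl
  · rintro ⟨j, gg⟩ hx
    rw [Finset.mem_sigma, Finset.mem_range, mem_psetnk] at hx
    obtain ⟨hj, hg1, hg2⟩ := hx
    have hmax : max k (gg.1 0) = k := by
      rw [hg2]; omega
    rw [mem_psetnk]
    constructor
    · show psize (consf (max k (gg.1 0)) gg.1) = n
      have hps := psize_shift (consPT k gg).2
      show psize (consPT k gg).1 = n
      rw [hps]
      have h0 : (consPT k gg).1 0 = k := by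
        show max k (gg.1 0) = k
        exact hmax
      have h1 : psize (fun i => (consPT k gg).1 (i+1)) = psize gg.1 := rfl
      rw [h0, h1, hg1]
      omega
    · show max k (gg.1 0) = k
      exact hmax
  · intro lam hlam
    rw [mem_psetnk] at hlam
    apply Subtype.ext
    show consf (max k (lam.1 1)) (fun i => lam.1 (i+1)) = lam.1
    have hmax : max k (lam.1 1) = k := by
      have : lam.1 1 ≤ lam.1 0 := lam.2.1 0
      omega
    rw [hmax]
    funext i
    cases i with
    | zero => exact hlam.2.symm
    | succ i => rfl
  · rintro ⟨j, gg⟩ hx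
    rw [Finset.mem_sigma, Finset.mem_range, mem_psetnk] at hx
    obtain ⟨hj, hg1, hg2⟩ := hx
    have hmax : max k (gg.1 0) = k := by rw [hg2]; omega
    have h1 : (consPT k gg).1 1 = j := by
      show gg.1 0 = j
      exact hg2
    have h2 : shiftPT (consPT k gg) = gg := by
      apply Subtype.ext
      rfl
    have : (⟨(consPT k gg).1 1, shiftPT (consPT k gg)⟩ : Σ _ : ℕ, PT) = ⟨j, gg⟩ := by
      rw [h1, h2]
    exact this
  · intro lam hlam
    rw [mem_psetnk] at hlam
    have hw := wgt_shift lam.2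
    rw [hw, hlam.2]
    rfl

/-- The zero partition. -/
noncomputable def zeroPT : PT := ⟨fun _ => 0, ⟨fun _ => le_rfl, ⟨0, fun _ _ => rfl⟩⟩⟩

theorem wgt_zeroPT : wgt zeroPT.1 = 1 := by
  have : wgt zeroPT.1 = ∏ i ∈ range 0, ((Nat.factorial (zeroPT.1 i - zeroPT.1 (i+1)) : ℚ))⁻¹ :=
    wgt_eq_prod (fun i _ => rfl)
  rw [this, Finset.prod_range_zero]

theorem psize_zeroPT : psize zeroPT.1 = 0 := by
  have : psize zeroPT.1 = ∑ i ∈ range 0, zeroPT.1 i := psize_eq_sum (fun i _ => rfl)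
  rw [this, Finset.sum_range_zero]

theorem pset_00 : (psetnk_finite 0 0).toFinset = {zeroPT} := by
  apply Finset.ext
  intro lam
  rw [mem_psetnk, Finset.mem_singleton]
  constructor
  · rintro ⟨h1, _⟩
    apply Subtype.ext
    funext i
    exact pf_zero_beyond lam.2 h1 i (Nat.zero_le i)
  · rintro rfl
    exact ⟨psize_zeroPT, rfl⟩

theorem pset_empty_of_k_zero {n : ℕ} (hn : 1 ≤ n) : (psetnk_finite n 0).toFinset = ∅ := by
  apply Finset.eq_empty_of_forall_notMem
  intro lam hlam
  rw [mem_psetnk] at hlam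
  obtain ⟨h1, h2⟩ := hlam
  have : ∀ i, lam.1 i = 0 := by
    intro i
    have := pf_anti lam.2 (Nat.zero_le i)
    omega
  have : psize lam.1 = 0 := by
    have h := psize_eq_sum (f := lam.1) (N := 0) (fun i _ => this i)
    rw [h, Finset.sum_range_zero]
  omega

theorem pset_empty_of_lt {n k : ℕ} (h : n < k) : (psetnk_finite n k).toFinset = ∅ := by
  apply Finset.eq_empty_of_forall_notMem
  intro lam hlam
  rw [mem_psetnk] at hlam
  obtain ⟨h1, h2⟩ := hlam
  have := fi_le_psize lam.2 0
  omega

theorem key_identity : ∀ n, ∀ k,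
    ∑ lam ∈ (psetnk_finite n k).toFinset, wgt lam.1
      = ((Nat.factorial k : ℚ))⁻¹ * cq k n := by
  intro n
  induction n using Nat.strong_induction_on with
  | _ n ih =>
    intro k
    rcases Nat.eq_zero_or_pos k with rfl | hk
    · rcases Nat.eq_zero_or_pos n with rfl | hn
      · rw [pset_00, Finset.sum_singleton, wgt_zeroPT]
        simp [cq]
      · rw [pset_empty_of_k_zero hn, Finset.sum_empty]
        have : cq 0 n = if n = 0 then 1 else 0 := rfl
        rw [this, if_neg (by omega), mul_zero]
    · rcases lt_or_ge n k with hlt | hle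
      · rw [pset_empty_of_lt hlt, Finset.sum_empty, cq_eq_zero_of_lt k n hlt, mul_zero]
      · rw [partition_rec hk hle]
        have hterm : ∀ j ∈ range (k+1),
            ((Nat.factorial (k - j) : ℚ))⁻¹ *
              ∑ gg ∈ (psetnk_finite (n-k) j).toFinset, wgt gg.1
            = ((Nat.factorial k : ℚ))⁻¹ * ((k.choose j : ℚ) * cq j (n-k)) := by
          intro j hj
          rw [Finset.mem_range] at hj
          rw [ih (n-k) (by omega) j]
          have hcf := Nat.choose_mul_factorial_mul_factorial (by omega : j ≤ k)
          have hne1 : (Nat.factorial (k-j) : ℚ) ≠ 0 := Nat.cast_ne_zero.2 (Nat.factorial_ne_zero _)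
          have hne2 : (Nat.factorial j : ℚ) ≠ 0 := Nat.cast_ne_zero.2 (Nat.factorial_ne_zero _)
          have hne3 : (Nat.factorial k : ℚ) ≠ 0 := Nat.cast_ne_zero.2 (Nat.factorial_ne_zero _)
          have hcfq : (k.choose j : ℚ) * (Nat.factorial j : ℚ) * (Nat.factorial (k-j) : ℚ)
              = (Nat.factorial k : ℚ) := by
            exact_mod_cast congrArg (fun x : ℕ => (x : ℚ)) hcf
          have hinv : ((Nat.factorial (k-j) : ℚ))⁻¹ * ((Nat.factorial j : ℚ))⁻¹
              = ((Nat.factorial k : ℚ))⁻¹ * (k.choose j : ℚ) := by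
            field_simp
            linear_combination -hcfq
          calc ((Nat.factorial (k-j) : ℚ))⁻¹ * (((Nat.factorial j : ℚ))⁻¹ * cq j (n-k))
              = (((Nat.factorial (k-j) : ℚ))⁻¹ * ((Nat.factorial j : ℚ))⁻¹) * cq j (n-k) := by
                ring
            _ = (((Nat.factorial k : ℚ))⁻¹ * (k.choose j : ℚ)) * cq j (n-k) := by rw [hinv]
            _ = ((Nat.factorial k : ℚ))⁻¹ * ((k.choose j : ℚ) * cq j (n-k)) := by ring
        rw [Finset.sum_congr rfl hterm, ← Finset.mul_sum, ← cq_vandermonde hk hle]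

end Key

/-- With `T = X 0`, `z = X 1`:
`Σ_λ T^{|λ|} Π_{h∈H^{(b)}(λ)} (z/h) = exp(zT/(1−T))`, where
`exp(zT/(1−T)) = Σ_{k≥0} (zT/(1−T))^k / k!`. -/
theorem stmt16 :
    (∑' lam : {f : ℕ → ℕ // PartitionFun f},
        (X 0 : MvPowerSeries (Fin 2) ℚ) ^ psize lam.1 *
          ∏ᶠ (p : ℕ × ℕ) (_ : bottomCell lam.1 p.1 p.2),
            (X 1 : MvPowerSeries (Fin 2) ℚ) *
              C (σ := Fin 2) (R := ℚ) ((hookLen lam.1 p.1 p.2 : ℚ)⁻¹)) =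
      ∑' k : ℕ, ((Nat.factorial k : ℚ)⁻¹) •
        ((X 1 : MvPowerSeries (Fin 2) ℚ) * (X 0) * (1 - X 0)⁻¹) ^ k := by
  apply MvPowerSeries.ext
  intro m
  rw [lhs_apply m, rhs_apply m, key_identity (m 0) (m 1)]
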